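/- Let Q be a semi-unital quantale. If the subquantale 𝕀(Q) of two-sided elements of Q has no zero divisors, then the subquantale 𝕃(Q) of left-sided elements also has no zero divisors; i.e., for left-sided α, β with α ≠ ⊥ and β ≠ ⊥, one has α * β ≠ ⊥. -/

import Mathlib

/-- A quantale: a complete lattice with an associative multiplication that
preserves arbitrary joins in each variable. -/
class Quantale' (α : Type*) extends CompleteLattice α, Semigroup α where
  mul_sSup_eq : ∀ (a : α) (s : Set α), a * sSup s = ⨆ b ∈ s, a * b
  sSup_mul_eq : ∀ (s : Set α) (a : α), sSup s * a = ⨆ b ∈ s, b * a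

section Defs

variable {α : Type*} [Quantale' α]

/-- `a` is left-sided: `⊤ * a ≤ a`. -/
def IsLeftSided (a : α) : Prop := ⊤ * a ≤ a

/-- `a` is right-sided: `a * ⊤ ≤ a`. -/
def IsRightSided (a : α) : Prop := a * ⊤ ≤ a

/-- `a` is two-sided. -/
def IsTwoSided (a : α) : Prop := IsLeftSided a ∧ IsRightSided a

/-- A quantale is semi-unital if `a ≤ ⊤ * a` and `a ≤ a * ⊤` for all `a`. -/
def SemiUnital (α : Type*) [Quantale' α] : Prop := ∀ a : α, a ≤ ⊤ * a ∧ a ≤ a * ⊤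

/-- A quantale is semi-integral if `a * ⊤ * b ≤ a * b` for all `a`, `b`. -/
def SemiIntegral (α : Type*) [Quantale' α] : Prop := ∀ a b : α, a * ⊤ * b ≤ a * b

/-- A quantale is a factor if its only two-sided elements are `⊥` and `⊤`. -/
def IsFactor (α : Type*) [Quantale' α] : Prop := ∀ a : α, IsTwoSided a → a = ⊥ ∨ a = ⊤

/-- Prime element of a quantale. -/
def IsPrime (p : α) : Prop :=
  p ≠ ⊤ ∧ ∀ a b : α, a * b ≤ p → a * ⊤ ≤ p ∨ ⊤ * b ≤ p

/-- Strongly prime element of a quantale. -/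
def IsStronglyPrime (p : α) : Prop :=
  p ≠ ⊤ ∧ ∀ a b : α, a * b ≤ p → a ⊔ a * ⊤ ≤ p ∨ b ⊔ ⊤ * b ≤ p

/-- A quantale is spatial if every element is a meet of prime elements. -/
def Spatial (α : Type*) [Quantale' α] : Prop :=
  ∀ a : α, ∃ S : Set α, (∀ p ∈ S, IsPrime p) ∧ a = sInf S

/-- A quantale is strongly spatial if every element is a meet of strongly prime elements. -/
def StronglySpatial (α : Type*) [Quantale' α] : Prop :=
  ∀ a : α, ∃ S : Set α, (∀ p ∈ S, IsStronglyPrime p) ∧ a = sInf S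

end Defs


section Aux
variable {Q : Type*} [Quantale' Q]

lemma qmul_le_mul_left {a b : Q} (c : Q) (h : a ≤ b) : a * c ≤ b * c := by
  have : sSup {a, b} * c = ⨆ x ∈ ({a,b} : Set Q), x * c := Quantale'.sSup_mul_eq _ _
  have hb : sSup ({a,b} : Set Q) = b := by
    rw [sSup_pair, sup_eq_right.mpr h]
  rw [hb] at this
  rw [this]
  exact le_biSup (fun x => x * c) (Set.mem_insert a {b})

lemma qmul_le_mul_right {a b : Q} (c : Q) (h : a ≤ b) : c * a ≤ c * b := by
  have : c * sSup {a, b} = ⨆ x ∈ ({a,b} : Set Q), c * x := Quantale'.mul_sSup_eq _ _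
  have hb : sSup ({a,b} : Set Q) = b := by
    rw [sSup_pair, sup_eq_right.mpr h]
  rw [hb] at this
  rw [this]
  exact le_biSup (fun x => c * x) (Set.mem_insert a {b})

lemma qbot_mul (a : Q) : (⊥ : Q) * a = ⊥ := by
  have := Quantale'.sSup_mul_eq (∅ : Set Q) a
  simpa using this

end Aux

/-- In a semi-unital quantale, if the two-sided elements have no zero
divisors, then neither do the left-sided elements. -/
theorem stmt1 {Q : Type*} [Quantale' Q] (hsu : SemiUnital Q)
    (hI : ∀ x y : Q, IsTwoSided x → IsTwoSided y → x ≠ ⊥ → y ≠ ⊥ → x * y ≠ ⊥) :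
    ∀ α β : Q, IsLeftSided α → IsLeftSided β → α ≠ ⊥ → β ≠ ⊥ → α * β ≠ ⊥ := by
  intro α β hα hβ hαne hβne hcontra
  -- α*⊤ and β*⊤ are two-sided and nonbot
  have hts : ∀ γ : Q, IsLeftSided γ → IsTwoSided (γ * ⊤) := by
    intro γ hγ
    constructor
    · calc ⊤ * (γ * ⊤) = (⊤ * γ) * ⊤ := (mul_assoc _ _ _).symm
        _ ≤ γ * ⊤ := qmul_le_mul_left _ hγ
    · calc (γ * ⊤) * ⊤ = γ * (⊤ * ⊤) := mul_assoc _ _ _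
        _ ≤ γ * ⊤ := qmul_le_mul_right _ le_top
  have hne : ∀ γ : Q, γ ≠ ⊥ → γ * ⊤ ≠ ⊥ := by
    intro γ hγ h
    exact hγ (le_bot_iff.mp (h ▸ (hsu γ).2))
  have key := hI (α * ⊤) (β * ⊤) (hts α hα) (hts β hβ) (hne α hαne) (hne β hβne)
  apply key
  have h1 : (α * ⊤) * (β * ⊤) ≤ (α * β) * ⊤ := by
    calc (α * ⊤) * (β * ⊤) = (α * (⊤ * β)) * ⊤ := by
          rw [mul_assoc, mul_assoc, mul_assoc]
      _ ≤ (α * β) * ⊤ := qmul_le_mul_left _ (qmul_le_mul_right _ hβ)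
  rw [hcontra, qbot_mul] at h1
  exact le_bot_iff.mp h1
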